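/- Let n ≥ 1 and let g be distributed according to the Haar probability measure on the compact group U(n) of unitary n×n complex matrices. Let e_1 be the first standard basis vector of ℂ^n and ω := Σ_{j=1}^n e_j ∧ (i·e_j) ∈ ⋀²_ℝ(ℂ^n). Then for every ℝ-linear functional φ on ⋀²_ℝ(ℂ^n), one has ∫_{U(n)} φ( Λ²(g)(e_1 ∧ (i·e_1)) ) dg = (1/n)·φ(ω); that is, the expectation of the random bivector Λ²(g)(e_1 ∧ i e_1) equals ω/n. -/

import Mathlib

open MeasureTheory
open scoped Matrix

noncomputable section

/-- The symplectic bivector `ω = ∑_j e_j ∧ (i·e_j)` of `ℂ^n`, viewed inside the real exterior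
algebra of `ℂ^n` (so it lies in `⋀²_ℝ(ℂ^n)`); `e_j` is the standard complex basis. -/
def omegaC (n : ℕ) : ExteriorAlgebra ℝ (Fin n → ℂ) :=
  ∑ j : Fin n,
    ExteriorAlgebra.ι ℝ (Pi.single j (1 : ℂ)) * ExteriorAlgebra.ι ℝ (Pi.single j Complex.I)

/-- The action of a unitary matrix `g ∈ U(n)` on the real exterior algebra of `ℂ^n`, via the
underlying `ℝ`-linear map of `g` on `ℂ^n`; its restriction to `⋀^d_ℝ(ℂ^n)` is `Λ^d(g)`. -/
def unitaryExtAction (n : ℕ) (g : Matrix.unitaryGroup (Fin n) ℂ) :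
    ExteriorAlgebra ℝ (Fin n → ℂ) →ₐ[ℝ] ExteriorAlgebra ℝ (Fin n → ℂ) :=
  ExteriorAlgebra.map
    ((Matrix.toLin' (g : Matrix (Fin n) (Fin n) ℂ)).restrictScalars ℝ)

/-- Real part of the `(j,0)` entry of a unitary matrix. -/
def xE (n : ℕ) (hn : 1 ≤ n) (j : Fin n) (g : Matrix.unitaryGroup (Fin n) ℂ) : ℝ :=
  ((g : Matrix (Fin n) (Fin n) ℂ) j ⟨0, hn⟩).re

/-- Imaginary part of the `(j,0)` entry of a unitary matrix. -/
def yE (n : ℕ) (hn : 1 ≤ n) (j : Fin n) (g : Matrix.unitaryGroup (Fin n) ℂ) : ℝ :=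
  ((g : Matrix (Fin n) (Fin n) ℂ) j ⟨0, hn⟩).im

/-- The bilinear form `(a, b) ↦ φ (ι a * ι b)` on `ℂ^n` over `ℝ`. -/
def Bphi (n : ℕ) (φ : ExteriorAlgebra ℝ (Fin n → ℂ) →ₗ[ℝ] ℝ) :
    (Fin n → ℂ) →ₗ[ℝ] (Fin n → ℂ) →ₗ[ℝ] ℝ :=
  LinearMap.mk₂ ℝ (fun a b => φ (ExteriorAlgebra.ι ℝ a * ExteriorAlgebra.ι ℝ b))
    (fun a a' b => by simp only [map_add, add_mul])
    (fun r a b => by simp only [LinearMap.map_smul, smul_mul_assoc])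
    (fun a b b' => by simp only [map_add, mul_add])
    (fun r a b => by simp only [LinearMap.map_smul, mul_smul_comm])

lemma Bphi_apply (n : ℕ) (φ : ExteriorAlgebra ℝ (Fin n → ℂ) →ₗ[ℝ] ℝ) (a b : Fin n → ℂ) :
    Bphi n φ a b = φ (ExteriorAlgebra.ι ℝ a * ExteriorAlgebra.ι ℝ b) := rfl

/-- decomposition of a vector of `ℂ^n` in the real basis `e_j, i e_j`. -/
lemma vec_decomp (n : ℕ) (v : Fin n → ℂ) :
    v = ∑ j, ((v j).re • (Pi.single j (1:ℂ) : Fin n → ℂ)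
      + (v j).im • (Pi.single j Complex.I : Fin n → ℂ)) := by
  funext k
  rw [Finset.sum_apply, Finset.sum_eq_single k]
  · simp only [Pi.add_apply, Pi.smul_apply, Pi.single_eq_same, Complex.real_smul, mul_one,
      smul_eq_mul]
    exact (Complex.re_add_im (v k)).symm
  · intro b _ hb
    simp [Pi.single_apply, hb.symm, (Ne.symm hb)]
  · simp

/-- expansion of the bilinear form in the real basis. -/
lemma Bphi_expand (n : ℕ) (φ : ExteriorAlgebra ℝ (Fin n → ℂ) →ₗ[ℝ] ℝ) (v w : Fin n → ℂ) :
    Bphi n φ v w = ∑ j, ∑ k,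
      ((v j).re * (w k).re * Bphi n φ (Pi.single j 1) (Pi.single k 1)
      + (v j).re * (w k).im * Bphi n φ (Pi.single j 1) (Pi.single k Complex.I)
      + (v j).im * (w k).re * Bphi n φ (Pi.single j Complex.I) (Pi.single k 1)
      + (v j).im * (w k).im * Bphi n φ (Pi.single j Complex.I) (Pi.single k Complex.I)) := by
  conv_lhs => rw [vec_decomp n v, vec_decomp n w]
  rw [map_sum, Finset.sum_comm]
  refine Finset.sum_congr rfl fun j _ => ?_
  rw [map_sum, LinearMap.sum_apply]
  refine Finset.sum_congr rfl fun k _ => ?_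
  simp only [map_add, LinearMap.add_apply, LinearMap.map_smul, LinearMap.smul_apply,
    smul_eq_mul]
  ring

/-- the key pointwise identity. -/
lemma action_pointwise (n : ℕ) (hn : 1 ≤ n) (φ : ExteriorAlgebra ℝ (Fin n → ℂ) →ₗ[ℝ] ℝ)
    (g : Matrix.unitaryGroup (Fin n) ℂ) :
    φ (unitaryExtAction n g
        (ExteriorAlgebra.ι ℝ (Pi.single (⟨0, hn⟩ : Fin n) (1 : ℂ)) *
          ExteriorAlgebra.ι ℝ (Pi.single (⟨0, hn⟩ : Fin n) Complex.I)))
    = ∑ j, ∑ k,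
      ((xE n hn j g * yE n hn k g) * (-(Bphi n φ (Pi.single j 1) (Pi.single k 1)))
      + (xE n hn j g * xE n hn k g) * Bphi n φ (Pi.single j 1) (Pi.single k Complex.I)
      + (yE n hn j g * yE n hn k g) * (-(Bphi n φ (Pi.single j Complex.I) (Pi.single k 1)))
      + (xE n hn k g * yE n hn j g) * Bphi n φ (Pi.single j Complex.I) (Pi.single k Complex.I)) := by
  set j0 : Fin n := ⟨0, hn⟩
  set c : Fin n → ℂ := fun l => (g : Matrix (Fin n) (Fin n) ℂ) l j0 with hc
  have h1 : unitaryExtAction n g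
      (ExteriorAlgebra.ι ℝ (Pi.single j0 (1:ℂ)) * ExteriorAlgebra.ι ℝ (Pi.single j0 Complex.I))
      = ExteriorAlgebra.ι ℝ c * ExteriorAlgebra.ι ℝ (Complex.I • c) := by
    rw [unitaryExtAction, _root_.map_mul]
    congr 1
    · rw [ExteriorAlgebra.map_apply_ι]
      congr 1
      show Matrix.toLin' _ (Pi.single j0 (1:ℂ)) = _
      rw [Matrix.toLin'_apply]
      ext l
      simp [Matrix.mulVec_single, hc]
    · rw [ExteriorAlgebra.map_apply_ι]
      congr 1
      show Matrix.toLin' _ (Pi.single j0 (Complex.I)) = _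
      rw [Matrix.toLin'_apply]
      ext l
      simp [Matrix.mulVec_single, hc, mul_comm]
  rw [h1, ← Bphi_apply, Bphi_expand]
  refine Finset.sum_congr rfl fun j _ => Finset.sum_congr rfl fun k _ => ?_
  have hre : ∀ l, ((Complex.I • c) l).re = -(yE n hn l g) := by
    intro l
    simp [yE, Pi.smul_apply, Complex.mul_re, hc]
    rfl
  have him : ∀ l, ((Complex.I • c) l).im = xE n hn l g := by
    intro l
    simp [xE, Pi.smul_apply, Complex.mul_im, hc]
    rfl
  have hcre : ∀ l, (c l).re = xE n hn l g := fun l => rfl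
  have hcim : ∀ l, (c l).im = yE n hn l g := fun l => rfl
  rw [hre, him, hcre, hcim]
  ring

def diagU (n : ℕ) (d : Fin n → ℂ) (hd : ∀ j, star (d j) * d j = 1) :
    Matrix.unitaryGroup (Fin n) ℂ :=
  ⟨Matrix.diagonal d, by
    rw [Matrix.mem_unitaryGroup_iff']
    show (Matrix.diagonal d)ᴴ * Matrix.diagonal d = 1
    rw [Matrix.diagonal_conjTranspose, Matrix.diagonal_mul_diagonal]
    simp only [Pi.star_apply, hd]
    exact Matrix.diagonal_one⟩

lemma diagU_mul_entry (n : ℕ) (d : Fin n → ℂ) (hd : ∀ j, star (d j) * d j = 1)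
    (g : Matrix.unitaryGroup (Fin n) ℂ) (i j : Fin n) :
    ((diagU n d hd * g : Matrix.unitaryGroup (Fin n) ℂ) : Matrix (Fin n) (Fin n) ℂ) i j
      = d i * (g : Matrix (Fin n) (Fin n) ℂ) i j := by
  show (Matrix.diagonal d * (g : Matrix (Fin n) (Fin n) ℂ)) i j = _
  simp [Matrix.diagonal_mul]

def swapU (n : ℕ) (σ : Equiv.Perm (Fin n)) : Matrix.unitaryGroup (Fin n) ℂ :=
  ⟨σ.permMatrix ℂ, by
    rw [Matrix.mem_unitaryGroup_iff']
    show (σ.permMatrix ℂ)ᴴ * σ.permMatrix ℂ = 1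
    have h1 : (σ.permMatrix ℂ)ᴴ = (σ.permMatrix ℂ)ᵀ := by
      ext i j
      simp [Matrix.conjTranspose_apply, Equiv.Perm.permMatrix, PEquiv.toMatrix_apply]
    rw [h1, Equiv.Perm.permMatrix, ← PEquiv.toMatrix_symm, ← Equiv.toPEquiv_symm,
      ← PEquiv.toMatrix_trans, ← Equiv.toPEquiv_trans]
    simp⟩

lemma swapU_mul_entry (n : ℕ) (σ : Equiv.Perm (Fin n))
    (g : Matrix.unitaryGroup (Fin n) ℂ) (i j : Fin n) :
    ((swapU n σ * g : Matrix.unitaryGroup (Fin n) ℂ) : Matrix (Fin n) (Fin n) ℂ) i j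
      = (g : Matrix (Fin n) (Fin n) ℂ) (σ i) j := by
  show (σ.permMatrix ℂ * (g : Matrix (Fin n) (Fin n) ℂ)) i j = _
  rw [Equiv.Perm.permMatrix, PEquiv.toMatrix_toPEquiv_mul]
  rfl

def iIU (n : ℕ) : Matrix.unitaryGroup (Fin n) ℂ :=
  diagU n (fun _ => Complex.I) (fun _ => by
    simp [Complex.star_def, Complex.conj_I])

def sgnU (n : ℕ) (k : Fin n) : Matrix.unitaryGroup (Fin n) ℂ :=
  diagU n (fun l => if l = k then (-1 : ℂ) else 1) (fun j => by
    by_cases h : j = k <;> simp [h])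

section
variable (n : ℕ) (hn : 1 ≤ n)

lemma xE_iIU (j : Fin n) (g : Matrix.unitaryGroup (Fin n) ℂ) :
    xE n hn j (iIU n * g) = -(yE n hn j g) := by
  simp [xE, yE, iIU, diagU_mul_entry, Complex.mul_re]

lemma yE_iIU (j : Fin n) (g : Matrix.unitaryGroup (Fin n) ℂ) :
    yE n hn j (iIU n * g) = xE n hn j g := by
  simp [xE, yE, iIU, diagU_mul_entry, Complex.mul_im]

lemma xE_sgnU (k j : Fin n) (g : Matrix.unitaryGroup (Fin n) ℂ) :
    xE n hn j (sgnU n k * g) = if j = k then -(xE n hn j g) else xE n hn j g := by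
  by_cases h : j = k <;> simp [xE, sgnU, diagU_mul_entry, h]

lemma yE_sgnU (k j : Fin n) (g : Matrix.unitaryGroup (Fin n) ℂ) :
    yE n hn j (sgnU n k * g) = if j = k then -(yE n hn j g) else yE n hn j g := by
  by_cases h : j = k <;> simp [yE, sgnU, diagU_mul_entry, h]

lemma xE_swapU (σ : Equiv.Perm (Fin n)) (j : Fin n) (g : Matrix.unitaryGroup (Fin n) ℂ) :
    xE n hn j (swapU n σ * g) = xE n hn (σ j) g := by
  simp [xE, swapU_mul_entry]

lemma colUnit (g : Matrix.unitaryGroup (Fin n) ℂ) :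
    ∑ l, (xE n hn l g * xE n hn l g + yE n hn l g * yE n hn l g) = 1 := by
  have h := Matrix.UnitaryGroup.star_mul_self g
  have h2 := congrArg (fun M => (M (⟨0, hn⟩ : Fin n) (⟨0, hn⟩ : Fin n)).re) h
  simp only [Matrix.mul_apply, Matrix.one_apply_eq, Complex.one_re] at h2
  rw [← h2, Complex.re_sum]
  refine Finset.sum_congr rfl fun l _ => ?_
  simp [Matrix.star_apply, Complex.mul_re, xE, yE]
end

section
variable (n : ℕ) (hn : 1 ≤ n)
  [MeasurableSpace (Matrix.unitaryGroup (Fin n) ℂ)]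
  [BorelSpace (Matrix.unitaryGroup (Fin n) ℂ)]
  (μ : Measure (Matrix.unitaryGroup (Fin n) ℂ))
  [IsProbabilityMeasure μ]
  (hinv : ∀ h : Matrix.unitaryGroup (Fin n) ℂ, Measure.map (fun g => h * g) μ = μ)
set_option linter.unusedSectionVars false

lemma xE_cont (j : Fin n) : Continuous (xE n hn j) :=
  Complex.continuous_re.comp (Continuous.matrix_elem (A := fun g : Matrix.unitaryGroup (Fin n) ℂ => (g : Matrix (Fin n) (Fin n) ℂ)) continuous_subtype_val j ⟨0, hn⟩)

lemma yE_cont (j : Fin n) : Continuous (yE n hn j) :=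
  Complex.continuous_im.comp (Continuous.matrix_elem (A := fun g : Matrix.unitaryGroup (Fin n) ℂ => (g : Matrix (Fin n) (Fin n) ℂ)) continuous_subtype_val j ⟨0, hn⟩)

lemma xE_bound (j : Fin n) (g : Matrix.unitaryGroup (Fin n) ℂ) : |xE n hn j g| ≤ 1 :=
  (Complex.abs_re_le_norm _).trans (entry_norm_bound_of_unitary g.2 j ⟨0, hn⟩)

lemma yE_bound (j : Fin n) (g : Matrix.unitaryGroup (Fin n) ℂ) : |yE n hn j g| ≤ 1 :=
  (Complex.abs_im_le_norm _).trans (entry_norm_bound_of_unitary g.2 j ⟨0, hn⟩)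

lemma int_of_bounded {F : Matrix.unitaryGroup (Fin n) ℂ → ℝ} (hF : Continuous F)
    (hb : ∀ g, |F g| ≤ 1) : Integrable F μ :=
  (integrable_const (1:ℝ)).mono' hF.aestronglyMeasurable (ae_of_all _ hb)

lemma prod_int {F G : Matrix.unitaryGroup (Fin n) ℂ → ℝ} (hF : Continuous F) (hG : Continuous G)
    (hbF : ∀ g, |F g| ≤ 1) (hbG : ∀ g, |G g| ≤ 1) :
    Integrable (fun g => F g * G g) μ := by
  refine int_of_bounded n μ (hF.mul hG) fun g => ?_
  rw [abs_mul]
  calc |F g| * |G g| ≤ 1 * 1 := by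
        exact mul_le_mul (hbF g) (hbG g) (abs_nonneg _) zero_le_one
    _ = 1 := one_mul 1

include hinv in
lemma inv_integral
    (h : Matrix.unitaryGroup (Fin n) ℂ) (F : Matrix.unitaryGroup (Fin n) ℂ → ℝ)
    (hF : Continuous F) :
    ∫ g, F (h * g) ∂μ = ∫ g, F g ∂μ := by
  have hcm : Continuous (fun g : Matrix.unitaryGroup (Fin n) ℂ => h * g) := by
    apply Continuous.subtype_mk
    exact continuous_const.matrix_mul continuous_subtype_val
  conv_rhs => rw [← hinv h]
  rw [integral_map hcm.measurable.aemeasurable]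
  rw [hinv h]
  exact hF.aestronglyMeasurable

include hinv in
lemma momS (j k : Fin n) : ∫ g, xE n hn j g * yE n hn k g ∂μ = 0 := by
  have hanti : ∀ a b : Fin n,
      ∫ g, xE n hn a g * yE n hn b g ∂μ = -∫ g, xE n hn b g * yE n hn a g ∂μ := by
    intro a b
    have h1 := inv_integral n μ hinv (iIU n) (fun g => xE n hn a g * yE n hn b g)
      ((xE_cont n hn a).mul (yE_cont n hn b))
    calc ∫ g, xE n hn a g * yE n hn b g ∂μ
        = ∫ g, xE n hn a (iIU n * g) * yE n hn b (iIU n * g) ∂μ := h1.symm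
      _ = ∫ g, -(xE n hn b g * yE n hn a g) ∂μ := by
          refine integral_congr_ae (ae_of_all _ fun g => ?_)
          beta_reduce
          rw [xE_iIU, yE_iIU]
          ring
      _ = -∫ g, xE n hn b g * yE n hn a g ∂μ := integral_neg _
  by_cases h : j = k
  · subst h
    have := hanti j j
    linarith
  · have h1 := inv_integral n μ hinv (sgnU n k) (fun g => xE n hn j g * yE n hn k g)
      ((xE_cont n hn j).mul (yE_cont n hn k))
    have h2 : ∫ g, xE n hn j g * yE n hn k g ∂μ
        = -∫ g, xE n hn j g * yE n hn k g ∂μ := by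
      calc ∫ g, xE n hn j g * yE n hn k g ∂μ
          = ∫ g, xE n hn j (sgnU n k * g) * yE n hn k (sgnU n k * g) ∂μ := h1.symm
        _ = ∫ g, -(xE n hn j g * yE n hn k g) ∂μ := by
            refine integral_congr_ae (ae_of_all _ fun g => ?_)
            beta_reduce
            rw [xE_sgnU, yE_sgnU, if_neg h, if_pos rfl]
            ring
        _ = -∫ g, xE n hn j g * yE n hn k g ∂μ := integral_neg _
    linarith

include hinv in
lemma momPQ (j k : Fin n) :
    ∫ g, xE n hn j g * xE n hn k g ∂μ = ∫ g, yE n hn j g * yE n hn k g ∂μ := by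
  have h1 := inv_integral n μ hinv (iIU n) (fun g => xE n hn j g * xE n hn k g)
    ((xE_cont n hn j).mul (xE_cont n hn k))
  calc ∫ g, xE n hn j g * xE n hn k g ∂μ
      = ∫ g, xE n hn j (iIU n * g) * xE n hn k (iIU n * g) ∂μ := h1.symm
    _ = ∫ g, yE n hn j g * yE n hn k g ∂μ := by
        refine integral_congr_ae (ae_of_all _ fun g => ?_)
        beta_reduce
        rw [xE_iIU, xE_iIU]
        ring

include hinv in
lemma momP (j k : Fin n) :
    ∫ g, xE n hn j g * xE n hn k g ∂μ = if j = k then (2 * (n:ℝ))⁻¹ else 0 := by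
  by_cases h : j = k
  · subst h
    rw [if_pos rfl]
    -- all diagonal moments equal
    have hdiag : ∀ a b : Fin n,
        ∫ g, xE n hn a g * xE n hn a g ∂μ = ∫ g, xE n hn b g * xE n hn b g ∂μ := by
      intro a b
      have h1 := inv_integral n μ hinv (swapU n (Equiv.swap a b))
        (fun g => xE n hn a g * xE n hn a g) ((xE_cont n hn a).mul (xE_cont n hn a))
      calc ∫ g, xE n hn a g * xE n hn a g ∂μ
          = ∫ g, xE n hn a (swapU n (Equiv.swap a b) * g)
              * xE n hn a (swapU n (Equiv.swap a b) * g) ∂μ := h1.symm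
        _ = ∫ g, xE n hn b g * xE n hn b g ∂μ := by
            refine integral_congr_ae (ae_of_all _ fun g => ?_)
            beta_reduce
            rw [xE_swapU, Equiv.swap_apply_left]
    -- total mass one
    have hsum : ∑ l : Fin n, ((∫ g, xE n hn l g * xE n hn l g ∂μ)
        + ∫ g, yE n hn l g * yE n hn l g ∂μ) = 1 := by
      have hint : ∀ l : Fin n, Integrable
          (fun g => xE n hn l g * xE n hn l g + yE n hn l g * yE n hn l g) μ := by
        intro l
        exact (prod_int n μ (xE_cont n hn l) (xE_cont n hn l) (xE_bound n hn l)
          (xE_bound n hn l)).add (prod_int n μ (yE_cont n hn l) (yE_cont n hn l)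
          (yE_bound n hn l) (yE_bound n hn l))
      calc ∑ l : Fin n, ((∫ g, xE n hn l g * xE n hn l g ∂μ)
            + ∫ g, yE n hn l g * yE n hn l g ∂μ)
          = ∑ l : Fin n, ∫ g, (xE n hn l g * xE n hn l g + yE n hn l g * yE n hn l g) ∂μ := by
            refine Finset.sum_congr rfl fun l _ => ?_
            rw [integral_add (prod_int n μ (xE_cont n hn l) (xE_cont n hn l)
              (xE_bound n hn l) (xE_bound n hn l)) (prod_int n μ (yE_cont n hn l)
              (yE_cont n hn l) (yE_bound n hn l) (yE_bound n hn l))]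
        _ = ∫ g, ∑ l : Fin n, (xE n hn l g * xE n hn l g + yE n hn l g * yE n hn l g) ∂μ :=
            (integral_finset_sum _ (fun l _ => hint l)).symm
        _ = ∫ (_ : Matrix.unitaryGroup (Fin n) ℂ), (1:ℝ) ∂μ := by
            refine integral_congr_ae (ae_of_all _ fun g => ?_)
            beta_reduce
            exact colUnit n hn g
        _ = 1 := by simp
    -- every summand equals twice the target
    have hsum2 : ∑ l : Fin n, ((∫ g, xE n hn l g * xE n hn l g ∂μ)
        + ∫ g, yE n hn l g * yE n hn l g ∂μ)
        = (n : ℝ) * (2 * ∫ g, xE n hn j g * xE n hn j g ∂μ) := by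
      rw [Finset.sum_congr rfl (fun l _ => ?_), Finset.sum_const, Finset.card_univ,
        Fintype.card_fin, nsmul_eq_mul]
      rw [← momPQ n hn μ hinv l l, hdiag l j]
      ring
    have hn0 : (n:ℝ) ≠ 0 := by
      have : 0 < n := hn
      positivity
    rw [hsum] at hsum2
    field_simp at hsum2 ⊢
    linarith
  · rw [if_neg h]
    have h1 := inv_integral n μ hinv (sgnU n k) (fun g => xE n hn j g * xE n hn k g)
      ((xE_cont n hn j).mul (xE_cont n hn k))
    have h2 : ∫ g, xE n hn j g * xE n hn k g ∂μ
        = -∫ g, xE n hn j g * xE n hn k g ∂μ := by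
      calc ∫ g, xE n hn j g * xE n hn k g ∂μ
          = ∫ g, xE n hn j (sgnU n k * g) * xE n hn k (sgnU n k * g) ∂μ := h1.symm
        _ = ∫ g, -(xE n hn j g * xE n hn k g) ∂μ := by
            refine integral_congr_ae (ae_of_all _ fun g => ?_)
            beta_reduce
            rw [xE_sgnU, xE_sgnU, if_neg h, if_pos rfl]
            ring
        _ = -∫ g, xE n hn j g * xE n hn k g ∂μ := integral_neg _
    linarith

include hinv in
lemma momQ (j k : Fin n) :
    ∫ g, yE n hn j g * yE n hn k g ∂μ = if j = k then (2 * (n:ℝ))⁻¹ else 0 := by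
  rw [← momPQ n hn μ hinv j k, momP n hn μ hinv j k]

end


/-- Let `g` be Haar-distributed on the compact group `U(n)` (i.e. distributed
according to the left-invariant Borel probability measure). Then for every `ℝ`-linear
functional `φ` on the real exterior algebra of `ℂ^n` (in particular on `⋀²_ℝ(ℂ^n)`),
`∫_{U(n)} φ(Λ²(g)(e₁ ∧ i e₁)) dg = (1/n) · φ(ω)`; that is, the expectation of the random
bivector `Λ²(g)(e₁ ∧ i e₁)` equals `ω/n`. -/
theorem stmt_9 (n : ℕ) (hn : 1 ≤ n)
    [MeasurableSpace (Matrix.unitaryGroup (Fin n) ℂ)]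
    [BorelSpace (Matrix.unitaryGroup (Fin n) ℂ)]
    (μ : Measure (Matrix.unitaryGroup (Fin n) ℂ))
    [IsProbabilityMeasure μ]
    (hinv : ∀ h : Matrix.unitaryGroup (Fin n) ℂ,
      Measure.map (fun g => h * g) μ = μ)
    (φ : ExteriorAlgebra ℝ (Fin n → ℂ) →ₗ[ℝ] ℝ) :
    (∫ g, φ (unitaryExtAction n g
        (ExteriorAlgebra.ι ℝ (Pi.single (⟨0, hn⟩ : Fin n) (1 : ℂ)) *
          ExteriorAlgebra.ι ℝ (Pi.single (⟨0, hn⟩ : Fin n) Complex.I))) ∂μ)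
      = (1 / n : ℝ) * φ (omegaC n) := by
  have hxy : ∀ j k : Fin n, Integrable (fun g => xE n hn j g * yE n hn k g) μ :=
    fun j k => prod_int n μ (xE_cont n hn j) (yE_cont n hn k) (xE_bound n hn j) (yE_bound n hn k)
  have hxx : ∀ j k : Fin n, Integrable (fun g => xE n hn j g * xE n hn k g) μ :=
    fun j k => prod_int n μ (xE_cont n hn j) (xE_cont n hn k) (xE_bound n hn j) (xE_bound n hn k)
  have hyy : ∀ j k : Fin n, Integrable (fun g => yE n hn j g * yE n hn k g) μ :=
    fun j k => prod_int n μ (yE_cont n hn j) (yE_cont n hn k) (yE_bound n hn j) (yE_bound n hn k)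
  have hT : ∀ j k : Fin n, Integrable (fun g =>
      (xE n hn j g * yE n hn k g) * (-(Bphi n φ (Pi.single j 1) (Pi.single k 1)))
      + (xE n hn j g * xE n hn k g) * Bphi n φ (Pi.single j 1) (Pi.single k Complex.I)
      + (yE n hn j g * yE n hn k g) * (-(Bphi n φ (Pi.single j Complex.I) (Pi.single k 1)))
      + (xE n hn k g * yE n hn j g) * Bphi n φ (Pi.single j Complex.I) (Pi.single k Complex.I)) μ :=
    fun j k => ((((hxy j k).mul_const _).add ((hxx j k).mul_const _)).add
      ((hyy j k).mul_const _)).add ((hxy k j).mul_const _)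
  have hanti : ∀ j : Fin n,
      Bphi n φ (Pi.single j Complex.I) (Pi.single j 1)
        = -(Bphi n φ (Pi.single j 1) (Pi.single j Complex.I)) := by
    intro j
    have h0 := ExteriorAlgebra.ι_add_mul_swap (R := ℝ)
      (Pi.single j (1:ℂ) : Fin n → ℂ) (Pi.single j Complex.I)
    have h1 := congrArg φ h0
    rw [map_add, map_zero] at h1
    rw [Bphi_apply, Bphi_apply]
    linarith
  have hn0 : (n:ℝ) ≠ 0 := by
    have : 0 < n := hn
    positivity
  calc (∫ g, φ (unitaryExtAction n g
        (ExteriorAlgebra.ι ℝ (Pi.single (⟨0, hn⟩ : Fin n) (1 : ℂ)) *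
          ExteriorAlgebra.ι ℝ (Pi.single (⟨0, hn⟩ : Fin n) Complex.I))) ∂μ)
      = ∫ g, ∑ j, ∑ k,
          ((xE n hn j g * yE n hn k g) * (-(Bphi n φ (Pi.single j 1) (Pi.single k 1)))
          + (xE n hn j g * xE n hn k g) * Bphi n φ (Pi.single j 1) (Pi.single k Complex.I)
          + (yE n hn j g * yE n hn k g) * (-(Bphi n φ (Pi.single j Complex.I) (Pi.single k 1)))
          + (xE n hn k g * yE n hn j g) * Bphi n φ (Pi.single j Complex.I) (Pi.single k Complex.I)) ∂μ :=
        integral_congr_ae (ae_of_all _ fun g => action_pointwise n hn φ g)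
    _ = ∑ j, ∑ k, ∫ g,
          ((xE n hn j g * yE n hn k g) * (-(Bphi n φ (Pi.single j 1) (Pi.single k 1)))
          + (xE n hn j g * xE n hn k g) * Bphi n φ (Pi.single j 1) (Pi.single k Complex.I)
          + (yE n hn j g * yE n hn k g) * (-(Bphi n φ (Pi.single j Complex.I) (Pi.single k 1)))
          + (xE n hn k g * yE n hn j g) * Bphi n φ (Pi.single j Complex.I) (Pi.single k Complex.I)) ∂μ := by
        rw [integral_finset_sum _ (fun j _ => integrable_finset_sum _ (fun k _ => hT j k))]
        exact Finset.sum_congr rfl fun j _ => integral_finset_sum _ (fun k _ => hT j k)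
    _ = ∑ j, ∑ k, ((if j = k then (2 * (n:ℝ))⁻¹ else 0) *
          (Bphi n φ (Pi.single j 1) (Pi.single k Complex.I)
            + -(Bphi n φ (Pi.single j Complex.I) (Pi.single k 1)))) := by
        refine Finset.sum_congr rfl fun j _ => Finset.sum_congr rfl fun k _ => ?_
        have i1 : Integrable (fun g => (xE n hn j g * yE n hn k g)
            * (-(Bphi n φ (Pi.single j 1) (Pi.single k 1)))) μ := (hxy j k).mul_const _
        have i2 : Integrable (fun g => (xE n hn j g * xE n hn k g)
            * Bphi n φ (Pi.single j 1) (Pi.single k Complex.I)) μ := (hxx j k).mul_const _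
        have i3 : Integrable (fun g => (yE n hn j g * yE n hn k g)
            * (-(Bphi n φ (Pi.single j Complex.I) (Pi.single k 1)))) μ := (hyy j k).mul_const _
        have i4 : Integrable (fun g => (xE n hn k g * yE n hn j g)
            * Bphi n φ (Pi.single j Complex.I) (Pi.single k Complex.I)) μ := (hxy k j).mul_const _
        have i12 : Integrable (fun g => (xE n hn j g * yE n hn k g)
            * (-(Bphi n φ (Pi.single j 1) (Pi.single k 1)))
            + (xE n hn j g * xE n hn k g)
            * Bphi n φ (Pi.single j 1) (Pi.single k Complex.I)) μ := i1.add i2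
        have i123 : Integrable (fun g => (xE n hn j g * yE n hn k g)
            * (-(Bphi n φ (Pi.single j 1) (Pi.single k 1)))
            + (xE n hn j g * xE n hn k g)
            * Bphi n φ (Pi.single j 1) (Pi.single k Complex.I)
            + (yE n hn j g * yE n hn k g)
            * (-(Bphi n φ (Pi.single j Complex.I) (Pi.single k 1)))) μ := i12.add i3
        rw [integral_add i123 i4, integral_add i12 i3, integral_add i1 i2,
          integral_mul_const, integral_mul_const, integral_mul_const, integral_mul_const,
          momS n hn μ hinv j k, momS n hn μ hinv k j,
          momP n hn μ hinv j k, momQ n hn μ hinv j k]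
        by_cases h : j = k
        · subst h; simp; ring
        · simp [h]
    _ = ∑ j, ((2 * (n:ℝ))⁻¹ *
          (Bphi n φ (Pi.single j 1) (Pi.single j Complex.I)
            + -(Bphi n φ (Pi.single j Complex.I) (Pi.single j 1)))) := by
        refine Finset.sum_congr rfl fun j _ => ?_
        rw [Finset.sum_eq_single j]
        · rw [if_pos rfl]
        · intro k _ hk
          rw [if_neg (fun h => hk h.symm), zero_mul]
        · intro h
          exact absurd (Finset.mem_univ j) h
    _ = (1 / n : ℝ) * φ (omegaC n) := by
        have homega : φ (omegaC n)
            = ∑ j, Bphi n φ (Pi.single j 1) (Pi.single j Complex.I) := by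
          rw [omegaC, map_sum]
          rfl
        rw [homega, Finset.mul_sum]
        refine Finset.sum_congr rfl fun j _ => ?_
        rw [hanti j]
        field_simp
        ring
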